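/- For each natural number n ≥ 1, the algebra P_n (defined below) satisfies the identity [[a,b],c] = 0 for all a,b,c in P_n, where [x,y] = xy - yx. -/

import Mathlib

inductive PBasis (n : ℕ) : Type
  | a : Fin n → Fin n → PBasis n
  | b : Fin n → Fin n → PBasis n
  | c : Fin n → PBasis n
  | d : Fin n → Fin n → PBasis n
  | e : Fin n → Fin n → PBasis n
  deriving DecidableEq

abbrev Pn (F : Type*) [Field F] (n : ℕ) : Type _ := PBasis n →₀ F

open PBasis in
noncomputable def mulB (F : Type*) [Field F] {n : ℕ} : PBasis n → PBasis n → Pn F n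
  | a i j, c k => if k = i then Finsupp.single (d i j) 1 else 0
  | b i j, c k => if k = i then Finsupp.single (e i j) 1 else 0
  | a i j, e k l => if i = k ∧ j = l then Finsupp.single (c j) 1 else 0
  | e k l, a i j => if i = k ∧ j = l then Finsupp.single (c j) 1 else 0
  | b i j, d k l => if i = k ∧ j = l then -Finsupp.single (c j) 1 else 0
  | d k l, b i j => if i = k ∧ j = l then -Finsupp.single (c j) 1 else 0
  | _, _ => 0

noncomputable def mulLin (F : Type*) [Field F] {n : ℕ} :
    Pn F n →ₗ[F] Pn F n →ₗ[F] Pn F n :=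
  Finsupp.lift (Pn F n →ₗ[F] Pn F n) F (PBasis n)
    (fun u => Finsupp.lift (Pn F n) F (PBasis n) (fun v => mulB F u v))

noncomputable instance (F : Type*) [Field F] (n : ℕ) : Mul (Pn F n) :=
  ⟨fun x y => mulLin F x y⟩

section Aux
variable (F : Type*) [Field F] {n : ℕ}

lemma Pn.mul_def (x y : Pn F n) : x * y = mulLin F x y := rfl

lemma Pn.add_mul (x x' y : Pn F n) : (x + x') * y = x * y + x' * y := by
  simp [Pn.mul_def, map_add]

lemma Pn.mul_add (x y y' : Pn F n) : x * (y + y') = x * y + x * y' := by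
  simp [Pn.mul_def, map_add]

lemma Pn.smul_mul (r : F) (x y : Pn F n) : (r • x) * y = r • (x * y) := by
  simp [Pn.mul_def, map_smul]

lemma Pn.mul_smul (r : F) (x y : Pn F n) : x * (r • y) = r • (x * y) := by
  simp [Pn.mul_def, map_smul]

lemma Pn.zero_mul (y : Pn F n) : (0 : Pn F n) * y = 0 := by simp [Pn.mul_def]

lemma Pn.mul_zero (x : Pn F n) : x * (0 : Pn F n) = 0 := by simp [Pn.mul_def]

lemma Pn.neg_mul (x y : Pn F n) : (-x) * y = -(x * y) := by simp [Pn.mul_def]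

lemma Pn.mul_neg (x y : Pn F n) : x * (-y) = -(x * y) := by simp [Pn.mul_def]

lemma Pn.sub_mul (x x' y : Pn F n) : (x - x') * y = x * y - x' * y := by
  simp [Pn.mul_def, map_sub]

lemma Pn.mul_sub (x y y' : Pn F n) : x * (y - y') = x * y - x * y' := by
  simp [Pn.mul_def, map_sub]

lemma single_mul_single (u v : PBasis n) :
    (Finsupp.single u (1 : F)) * Finsupp.single v 1 = mulB F u v := by
  simp [Pn.mul_def, mulLin, Finsupp.lift_apply, Finsupp.sum_single_index]

lemma symm_d (i j : Fin n) (w : PBasis n) : mulB F (.d i j) w = mulB F w (.d i j) := by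
  cases w <;> rfl

lemma symm_e (i j : Fin n) (w : PBasis n) : mulB F (.e i j) w = mulB F w (.e i j) := by
  cases w <;> rfl

lemma comm_single_d (i j : Fin n) (w : PBasis n) :
    Finsupp.single (PBasis.d i j) (1 : F) * Finsupp.single w 1
      - Finsupp.single w 1 * Finsupp.single (PBasis.d i j) 1 = 0 := by
  rw [single_mul_single, single_mul_single, symm_d, sub_self]

lemma comm_single_e (i j : Fin n) (w : PBasis n) :
    Finsupp.single (PBasis.e i j) (1 : F) * Finsupp.single w 1
      - Finsupp.single w 1 * Finsupp.single (PBasis.e i j) 1 = 0 := by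
  rw [single_mul_single, single_mul_single, symm_e, sub_self]

lemma core (u v w : PBasis n) :
    (Finsupp.single u (1 : F) * Finsupp.single v 1
        - Finsupp.single v 1 * Finsupp.single u 1) * Finsupp.single w 1
      - Finsupp.single w 1 * (Finsupp.single u 1 * Finsupp.single v 1
        - Finsupp.single v 1 * Finsupp.single u 1) = 0 := by
  rw [single_mul_single, single_mul_single]
  cases u <;> cases v <;>
    simp only [mulB, sub_self, sub_zero, zero_sub, Pn.zero_mul, Pn.mul_zero,
      Pn.neg_mul, Pn.mul_neg, neg_zero, neg_sub, neg_neg]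
  all_goals try split_ifs
  all_goals
    first
    | rfl
    | simp only [Pn.zero_mul, Pn.mul_zero, sub_self, sub_zero, zero_sub, neg_zero,
        single_mul_single, symm_d, symm_e, neg_add_cancel, add_neg_cancel, neg_neg,
        neg_sub, sub_neg_eq_add]
end Aux

theorem stmt (F : Type*) [Field F] (n : ℕ) (hn : 1 ≤ n) :
    ∀ x y z : Pn F n, (x * y - y * x) * z - z * (x * y - y * x) = 0 := by
  intro x y z
  induction x using Finsupp.induction_linear with
  | zero => simp [Pn.zero_mul, Pn.mul_zero, Pn.sub_mul, Pn.mul_sub]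
  | add f g hf hg =>
      have : (f + g) * y - y * (f + g) = (f * y - y * f) + (g * y - y * g) := by
        rw [Pn.add_mul, Pn.mul_add]; abel
      rw [this, Pn.add_mul, Pn.mul_add]
      rw [show ∀ A B C D : Pn F n, A + B - (C + D) = (A - C) + (B - D) by intros; abel]
      rw [hf, hg, add_zero]
  | single u r =>
      induction y using Finsupp.induction_linear with
      | zero => simp [Pn.zero_mul, Pn.mul_zero, Pn.sub_mul, Pn.mul_sub]
      | add f g hf hg =>
          have : Finsupp.single u r * (f + g) - (f + g) * Finsupp.single u r
              = (Finsupp.single u r * f - f * Finsupp.single u r)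
                + (Finsupp.single u r * g - g * Finsupp.single u r) := by
            rw [Pn.add_mul, Pn.mul_add]; abel
          rw [this, Pn.add_mul, Pn.mul_add]
          rw [show ∀ A B C D : Pn F n, A + B - (C + D) = (A - C) + (B - D) by intros; abel]
          rw [hf, hg, add_zero]
      | single v s =>
          induction z using Finsupp.induction_linear with
          | zero => simp [Pn.zero_mul, Pn.mul_zero]
          | add f g hf hg =>
              rw [Pn.mul_add, Pn.add_mul]
              rw [show ∀ A B C D : Pn F n, A + B - (C + D) = (A - C) + (B - D) by intros; abel]
              rw [hf, hg, add_zero]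
          | single w t =>
              have hu : Finsupp.single u r = r • Finsupp.single u (1 : F) := by
                simp [Finsupp.smul_single']
              have hv : Finsupp.single v s = s • Finsupp.single v (1 : F) := by
                simp [Finsupp.smul_single']
              have hw : Finsupp.single w t = t • Finsupp.single w (1 : F) := by
                simp [Finsupp.smul_single']
              rw [hu, hv, hw]
              have h := core F u v w
              have expand : ∀ q : Pn F n, q = 0 → (r * s * t) • q = 0 := by
                intro q hq; rw [hq, smul_zero]
              have h2 := expand _ h
              rw [← h2]
              simp only [Pn.smul_mul, Pn.mul_smul, Pn.sub_mul, Pn.mul_sub, smul_sub,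
                smul_smul]
              module
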